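/- For all n ≥ 1, 1 + Σ_{h=1}^{n−1} (n−h)·C_h equals the number of Schröder paths of semilength n−1 avoiding the pattern U H D, where such paths are exactly those of the form H^a Q H^b with Q a Dyck path. -/

import Mathlib

/-- `q` (with `true` an up step and `false` a down step) is a Dyck word. -/
def IsDyckWord (l : List Bool) : Prop :=
  (∀ m, (l.take m).count false ≤ (l.take m).count true) ∧
    l.count false = l.count true

/-- A Schröder path avoiding UHD, encoded as a list over `Option Bool`
(`none` = a double horizontal step, `some true` = up, `some false` = down):
it has the form H^a Q H^b with Q a Dyck path. -/
def IsUHDAvoidingSchroder (l : List (Option Bool)) (semilength : ℕ) : Prop :=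
  ∃ a b q, IsDyckWord q ∧
    l = List.replicate a none ++ q.map some ++ List.replicate b none ∧
    2 * a + 2 * b + q.length = 2 * semilength

open DyckStep in
/-- DyckStep to Bool -/
def boolOf : DyckStep → Bool | U => true | D => false

open DyckStep in
/-- Bool to DyckStep -/
def stepOf : Bool → DyckStep | true => U | false => D

@[simp] lemma boolOf_stepOf (b : Bool) : boolOf (stepOf b) = b := by cases b <;> rfl

lemma boolOf_injective : Function.Injective boolOf := by
  intro a b h; cases a <;> cases b <;> simp [boolOf] at h ⊢

open DyckStep in
lemma count_boolOf (l : List DyckStep) :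
    (l.map boolOf).count true = l.count U ∧ (l.map boolOf).count false = l.count D := by
  constructor
  · have : true = boolOf U := rfl
    rw [this, List.count_map_of_injective _ _ boolOf_injective]
  · have : false = boolOf D := rfl
    rw [this, List.count_map_of_injective _ _ boolOf_injective]

lemma isDyckWord_map_boolOf (p : DyckWord) : IsDyckWord (p.toList.map boolOf) := by
  constructor
  · intro m
    rw [← List.map_take, (count_boolOf _).1, (count_boolOf _).2]
    exact p.count_D_le_count_U m
  · rw [(count_boolOf _).1, (count_boolOf _).2, p.count_U_eq_count_D]

open DyckStep in
/-- Build a DyckWord from a Bool list which is a Dyck word. -/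
def mkDyckWord (q : List Bool) (hq : IsDyckWord q) : DyckWord where
  toList := q.map stepOf
  count_U_eq_count_D := by
    have hU : (q.map stepOf).count U = q.count true := by
      have : U = stepOf true := rfl
      rw [this, List.count_map_of_injective]
      intro a b h; cases a <;> cases b <;> simp [stepOf] at h ⊢
    have hD : (q.map stepOf).count D = q.count false := by
      have : D = stepOf false := rfl
      rw [this, List.count_map_of_injective]
      intro a b h; cases a <;> cases b <;> simp [stepOf] at h ⊢
    rw [hU, hD, hq.2]
  count_D_le_count_U i := by
    have hU : ((q.map stepOf).take i).count U = (q.take i).count true := by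
      have : U = stepOf true := rfl
      rw [← List.map_take, this, List.count_map_of_injective]
      intro a b h; cases a <;> cases b <;> simp [stepOf] at h ⊢
    have hD : ((q.map stepOf).take i).count D = (q.take i).count false := by
      have : D = stepOf false := rfl
      rw [← List.map_take, this, List.count_map_of_injective]
      intro a b h; cases a <;> cases b <;> simp [stepOf] at h ⊢
    rw [hU, hD]; exact hq.1 i

@[simp] lemma map_boolOf_mkDyckWord (q : List Bool) (hq : IsDyckWord q) :
    (mkDyckWord q hq).toList.map boolOf = q := by
  simp only [mkDyckWord, List.map_map]
  have : boolOf ∘ stepOf = id := by funext b; cases b <;> rfl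
  simp [this]

/-- The encoding of a path. -/
def encode (a : ℕ) (q : List Bool) (b : ℕ) : List (Option Bool) :=
  List.replicate a none ++ q.map some ++ List.replicate b none

lemma decode_a (a b : ℕ) {q : List Bool} (hq : q ≠ []) :
    ((encode a q b).takeWhile Option.isNone).length = a := by
  obtain ⟨x, t, rfl⟩ := List.exists_cons_of_ne_nil hq
  rw [encode, List.append_assoc, List.takeWhile_append_of_pos (by simp)]
  simp [List.takeWhile_cons_of_neg]

lemma decode_q (a b : ℕ) {q : List Bool} :
    (((encode a q b).drop a).takeWhile Option.isSome) = q.map some := by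
  rw [encode, List.append_assoc, List.drop_left' (by simp)]
  rw [List.takeWhile_append_of_pos
    (fun x hx => by obtain ⟨y, -, rfl⟩ := List.mem_map.mp hx; rfl)]
  have : (List.replicate b (none : Option Bool)).takeWhile Option.isSome = [] := by
    cases b <;> simp [List.takeWhile_cons_of_neg]
  simp [this]

lemma encode_inj {a a' b b' : ℕ} {q q' : List Bool} (hq : q ≠ []) (hq' : q' ≠ [])
    (h : encode a q b = encode a' q' b') : a = a' ∧ q = q' ∧ b = b' := by
  have ha : a = a' := by rw [← decode_a a b hq, h, decode_a a' b' hq']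
  have hqe : q = q' := by
    have := decode_q a b (q := q)
    rw [h, ha, decode_q] at this
    exact (List.map_injective_iff.mpr (Option.some_injective _) this).symm
  refine ⟨ha, hqe, ?_⟩
  have hl := congrArg List.length h
  simp [encode, ha, hqe] at hl
  omega

lemma length_count_bool (q : List Bool) : q.length = q.count true + q.count false := by
  induction q with
  | nil => rfl
  | cons x t ih =>
    cases x <;> rw [List.length_cons, List.count_cons, List.count_cons] <;> simp <;> omega

lemma length_even_of_dyck {q : List Bool} (hq : IsDyckWord q) :
    q.length = 2 * q.count true := by
  have h2 := hq.2
  have := length_count_bool q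
  omega

lemma dyck_ne_nil_count_pos {q : List Bool} (hq : IsDyckWord q) (h : q ≠ []) :
    0 < q.count true := by
  rcases Nat.eq_zero_or_pos (q.count true) with h0 | h0
  · exfalso
    have := length_even_of_dyck hq
    rw [h0] at this
    exact h (List.length_eq_zero_iff.mp (by omega))
  · exact h0

lemma toList_ne_nil_of_semilength_pos {p : DyckWord} (h : 0 < p.semilength) :
    p.toList ≠ [] := by
  intro hnil
  have := p.two_mul_semilength_eq_length
  rw [hnil] at this
  simp only [List.length_nil] at this
  omega

theorem sum_eq_count_schroder (n : ℕ) (hn : 1 ≤ n) :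
    1 + ∑ h ∈ Finset.Ico 1 n, (n - h) * (Nat.choose (2 * h) h / (h + 1)) =
      Nat.card {l : List (Option Bool) // IsUHDAvoidingSchroder l (n - 1)} := by
  set m := n - 1 with hm
  -- the counting type
  -- the bijection
  have key : Nat.card {l : List (Option Bool) // IsUHDAvoidingSchroder l m} =
      Nat.card (Unit ⊕ (Σ h : Fin m, Fin (m - h) × {p : DyckWord // p.semilength = h + 1})) := by
    refine (Nat.card_eq_of_bijective (fun t : Unit ⊕ (Σ h : Fin m, Fin (m - h) × {p : DyckWord // p.semilength = h + 1}) => match t with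
      | Sum.inl _ => ⟨List.replicate m none, m, 0, [], ⟨fun _ => by simp, rfl⟩, by simp, by simp⟩
      | Sum.inr ⟨h, a, p⟩ => ⟨encode a (p.1.toList.map boolOf) (m - (h + 1) - a),
          a, m - (h + 1) - a, p.1.toList.map boolOf, isDyckWord_map_boolOf p.1, rfl, by
            have h1 : (h : ℕ) < m := h.2
            have h2 : (a : ℕ) < m - h := a.2
            have h3 : (p.1.toList.map boolOf).length = 2 * ((h : ℕ) + 1) := by
              rw [List.length_map, ← p.1.two_mul_semilength_eq_length, p.2]
            omega⟩) ?_).symm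
    constructor
    · rintro (⟨⟩ | ⟨h, a, p⟩) (⟨⟩ | ⟨h', a', p'⟩) heq
      · rfl
      · exfalso
        simp only [Subtype.mk.injEq] at heq
        replace heq := congrArg Subtype.val heq
        dsimp only at heq
        have hne : p'.1.toList.map boolOf ≠ [] := by
          simp only [ne_eq, List.map_eq_nil_iff]
          exact toList_ne_nil_of_semilength_pos (by rw [p'.2]; omega)
        have := decode_a (a' : ℕ) (m - ((h' : ℕ) + 1) - a') hne
        rw [← heq] at this
        have h2 : ((List.replicate m (none : Option Bool)).takeWhile Option.isNone).length = m := by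
          simp [List.takeWhile_replicate]
        rw [h2] at this
        have h1 : (h' : ℕ) < m := h'.2
        have h2 : (a' : ℕ) < m - h' := a'.2
        omega
      · exfalso
        simp only [Subtype.mk.injEq] at heq
        replace heq := congrArg Subtype.val heq
        dsimp only at heq
        have hne : p.1.toList.map boolOf ≠ [] := by
          simp only [ne_eq, List.map_eq_nil_iff]
          exact toList_ne_nil_of_semilength_pos (by rw [p.2]; omega)
        have := decode_a (a : ℕ) (m - ((h : ℕ) + 1) - a) hne
        rw [heq] at this
        have h2 : ((List.replicate m (none : Option Bool)).takeWhile Option.isNone).length = m := by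
          simp [List.takeWhile_replicate]
        rw [h2] at this
        have h1 : (h : ℕ) < m := h.2
        have h2 : (a : ℕ) < m - h := a.2
        omega
      · simp only [Subtype.mk.injEq] at heq
        replace heq := congrArg Subtype.val heq
        dsimp only at heq
        have hne : p.1.toList.map boolOf ≠ [] := by
          simp only [ne_eq, List.map_eq_nil_iff]
          exact toList_ne_nil_of_semilength_pos (by rw [p.2]; omega)
        have hne' : p'.1.toList.map boolOf ≠ [] := by
          simp only [ne_eq, List.map_eq_nil_iff]
          exact toList_ne_nil_of_semilength_pos (by rw [p'.2]; omega)
        obtain ⟨ha, hq, -⟩ := encode_inj hne hne' heq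
        have hp : p.1 = p'.1 := by
          ext1
          exact List.map_injective_iff.mpr boolOf_injective hq
        have hh : h = h' := by
          have e1 := p.2; have e2 := p'.2
          rw [hp] at e1
          exact Fin.ext (by omega)
        subst hh
        have haa : a = a' := Fin.ext ha
        subst haa
        have hpp : p = p' := Subtype.ext hp
        rw [hpp]
    · rintro ⟨l, a, b, q, hq, rfl, hlen⟩
      rcases eq_or_ne q [] with rfl | hqne
      · refine ⟨Sum.inl (), ?_⟩
        simp only [Subtype.mk.injEq]
        apply Subtype.ext
        dsimp only
        simp only [List.length_nil, add_zero] at hlen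
        simp only [List.map_nil, List.append_nil]
        rw [← List.replicate_add]
        congr 1
        omega
      · set h' := q.count true with hh'
        have hlq : q.length = 2 * h' := length_even_of_dyck hq
        have hpos : 0 < h' := dyck_ne_nil_count_pos hq hqne
        have hhm : h' - 1 < m := by omega
        have ham : a < m - (h' - 1) := by omega
        refine ⟨Sum.inr ⟨⟨h' - 1, hhm⟩, ⟨a, ham⟩, ⟨mkDyckWord q hq, ?_⟩⟩, ?_⟩
        · show (mkDyckWord q hq).semilength = h' - 1 + 1
          have : (mkDyckWord q hq).semilength = h' := by
            rw [DyckWord.semilength, mkDyckWord]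
            have : DyckStep.U = stepOf true := rfl
            rw [this, List.count_map_of_injective]
            intro x y hxy; cases x <;> cases y <;> simp [stepOf] at hxy ⊢
          omega
        · simp only [Subtype.mk.injEq]
          apply Subtype.ext
          dsimp only
          rw [map_boolOf_mkDyckWord]
          rw [encode]
          congr 2
          omega
  have hcard : Nat.card (Unit ⊕ (Σ h : Fin m, Fin (m - h) × {p : DyckWord // p.semilength = h + 1}))
      = 1 + ∑ h : Fin m, (m - (h : ℕ)) * catalan ((h : ℕ) + 1) := by
    rw [Nat.card_eq_fintype_card, Fintype.card_sum, Fintype.card_unit, Fintype.card_sigma]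
    congr 1
    refine Finset.sum_congr rfl fun h _ => ?_
    rw [Fintype.card_prod, Fintype.card_fin, DyckWord.card_dyckWord_semilength_eq_catalan]
  rw [key, hcard]
  congr 1
  rw [Fin.sum_univ_eq_sum_range (fun i => (m - i) * catalan (i + 1))]
  rw [Finset.sum_Ico_eq_sum_range, ← hm]
  refine Finset.sum_congr rfl fun i hi => ?_
  simp only [Finset.mem_range] at hi
  have e1 : 1 + i = i + 1 := by omega
  have e2 : n - (i + 1) = m - i := by omega
  rw [e1, e2, catalan_eq_centralBinom_div, Nat.centralBinom_eq_two_mul_choose]
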